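/- Let 𝒜 = {A_α : α < ω₁} be a Luzin family, i.e. an almost disjoint family enumerated so that for every α < ω₁ and every n ∈ ω the set {β < α : A_α ∩ A_β ⊆ n} is finite. Then for any two disjoint uncountable subfamilies ℬ, 𝒞 ⊆ 𝒜 there is no set D ⊆ ω with B ⊆* D for every B ∈ ℬ and C ∩ D finite for every C ∈ 𝒞. -/

import Mathlib

open Set

/-- `A ⊆* D`: `A \ D` is finite. -/
def AlmostSubset (A D : Set ℕ) : Prop := (A \ D).Finite

/-- An almost disjoint family: a family of infinite subsets of `ℕ` any two distinct
members of which have finite intersection. -/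
def AlmostDisjointFam (𝒜 : Set (Set ℕ)) : Prop :=
  (∀ A ∈ 𝒜, A.Infinite) ∧ ∀ A ∈ 𝒜, ∀ B ∈ 𝒜, A ≠ B → (A ∩ B).Finite

/-- A maximal almost disjoint (MAD) family. -/
def MADFam (𝒜 : Set (Set ℕ)) : Prop :=
  AlmostDisjointFam 𝒜 ∧ ∀ X : Set ℕ, X.Infinite → ∃ A ∈ 𝒜, (A ∩ X).Infinite

/-- `D` is a partitioner for the family `𝒜`. -/
def IsPartitioner (𝒜 : Set (Set ℕ)) (D : Set ℕ) : Prop :=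
  ∀ A ∈ 𝒜, AlmostSubset A D ∨ (A ∩ D).Finite

/-- The topology of the Ψ-space `Ψ(𝒜)` on the set `ℕ ⊕ ↥𝒜`: points of `ℕ` are isolated
and the sets `{A} ∪ (A \ F)`, `F` finite, form a neighbourhood base at `A ∈ 𝒜`. -/
def psiTop (𝒜 : Set (Set ℕ)) : TopologicalSpace (ℕ ⊕ ↥𝒜) where
  IsOpen U := ∀ A : ↥𝒜, Sum.inr A ∈ U → ((A : Set ℕ) \ {n | Sum.inl n ∈ U}).Finite
  isOpen_univ := by intro A _; simp
  isOpen_inter := by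
    intro U V hU hV A hA
    apply ((hU A hA.1).union (hV A hA.2)).subset
    rintro n ⟨hnA, hn⟩
    by_cases hU' : Sum.inl n ∈ U
    · exact Or.inr ⟨hnA, fun hV' => hn ⟨hU', hV'⟩⟩
    · exact Or.inl ⟨hnA, hU'⟩
  isOpen_sUnion := by
    intro S hS A hA
    obtain ⟨U, hU, hAU⟩ := Set.mem_sUnion.mp hA
    apply (hS U hU A hAU).subset
    rintro n ⟨hnA, hn⟩
    exact ⟨hnA, fun h => hn (Set.mem_sUnion.mpr ⟨U, hU, h⟩)⟩

/-- A set is regular closed if it is the closure of its interior. -/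
def IsRegClosed {X : Type*} [TopologicalSpace X] (K : Set X) : Prop :=
  closure (interior K) = K

/-- A set is π-closed if it is a finite intersection of regular closed sets. -/
def IsPiClosed {X : Type*} [TopologicalSpace X] (K : Set X) : Prop :=
  ∃ (n : ℕ) (f : Fin n → Set X), (∀ i, IsRegClosed (f i)) ∧ K = ⋂ i, f i

/-- A space is almost-normal if any two disjoint closed sets, one of which is regular
closed, can be separated by disjoint open sets. -/
def AlmostNormalSp (X : Type*) [TopologicalSpace X] : Prop :=
  ∀ C K : Set X, IsClosed C → IsClosed K → IsRegClosed K → Disjoint C K →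
    ∃ U V : Set X, IsOpen U ∧ IsOpen V ∧ C ⊆ U ∧ K ⊆ V ∧ Disjoint U V

/-- A space is partly-normal if any two disjoint closed sets, one regular closed and the
other π-closed, can be separated by disjoint open sets. -/
def PartlyNormalSp (X : Type*) [TopologicalSpace X] : Prop :=
  ∀ K₀ K₁ : Set X, IsRegClosed K₀ → IsPiClosed K₁ → Disjoint K₀ K₁ →
    ∃ U V : Set X, IsOpen U ∧ IsOpen V ∧ K₀ ⊆ U ∧ K₁ ⊆ V ∧ Disjoint U V

/-- A space is quasi-normal if any two disjoint π-closed sets can be separated by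
disjoint open sets. -/
def QuasiNormalSp (X : Type*) [TopologicalSpace X] : Prop :=
  ∀ K₀ K₁ : Set X, IsPiClosed K₀ → IsPiClosed K₁ → Disjoint K₀ K₁ →
    ∃ U V : Set X, IsOpen U ∧ IsOpen V ∧ K₀ ⊆ U ∧ K₁ ⊆ V ∧ Disjoint U V

/-- `D^0 = D` and `D^1 = ℕ \ D`. -/
def boolPart (D : Set ℕ) : Bool → Set ℕ
  | false => D
  | true => Dᶜ

/-- Two sets are equal modulo a finite set. -/
def EqModFin (X Y : Set ℕ) : Prop := ((X \ Y) ∪ (Y \ X)).Finite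

/-- A nice family of partitioners for `𝒜`. -/
def NiceFamily (𝒜 𝒟 : Set (Set ℕ)) : Prop :=
  (∀ D ∈ 𝒟, IsPartitioner 𝒜 D) ∧
  ∀ (n : ℕ) (Ds : Fin n → Set ℕ), (∀ i, Ds i ∈ 𝒟) → ∀ f : Fin n → Bool,
    {A | A ∈ 𝒜 ∧ AlmostSubset A (⋂ i, boolPart (Ds i) (f i))}.Finite →
    EqModFin (⋂ i, boolPart (Ds i) (f i))
      (⋃₀ {A | A ∈ 𝒜 ∧ AlmostSubset A (⋂ i, boolPart (Ds i) (f i))})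

/-- `𝒜` is strongly ℵ₀-separated. -/
def StronglyAleph0Separated (𝒜 : Set (Set ℕ)) : Prop :=
  ∀ ℬ 𝒞 : Set (Set ℕ), ℬ ⊆ 𝒜 → 𝒞 ⊆ 𝒜 → ℬ.Countable → 𝒞.Countable → Disjoint ℬ 𝒞 →
    ∃ D : Set ℕ, IsPartitioner 𝒜 D ∧ (∀ B ∈ ℬ, AlmostSubset B D) ∧
      ∀ C ∈ 𝒞, (C ∩ D).Finite

/-- `𝒜` is weakly separated. -/
def WeaklySeparated (𝒜 : Set (Set ℕ)) : Prop :=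
  ∀ ℬ 𝒞 : Set (Set ℕ), ℬ ⊆ 𝒜 → 𝒞 ⊆ 𝒜 → Disjoint ℬ 𝒞 →
    ∃ D : Set ℕ, D.Infinite ∧ (∀ B ∈ ℬ, (D ∩ B).Infinite) ∧ ∀ C ∈ 𝒞, (D ∩ C).Finite

lemma iic_countable (i : (Cardinal.aleph 1).ord.ToType) : (Set.Iic i).Countable := by
  have h1 : (Set.Iio i).Countable := by
    rw [Cardinal.countable_iff_lt_aleph_one]
    exact Cardinal.mk_Iio_ord_toType i
  have : Set.Iic i = Set.Iio i ∪ {i} := by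
    ext x; simp [le_iff_lt_or_eq]
  rw [this]
  exact h1.union (countable_singleton i)

/-- In a Luzin family `{A_α : α < ω₁}`, no two disjoint uncountable
subfamilies can be separated. -/
theorem statement7 (A : (Cardinal.aleph 1).ord.ToType → Set ℕ)
    (hinf : ∀ α, (A α).Infinite) (hinj : Function.Injective A)
    (had : ∀ α β, α ≠ β → (A α ∩ A β).Finite)
    (hLuzin : ∀ α, ∀ n : ℕ, {β | β < α ∧ A α ∩ A β ⊆ Set.Iio n}.Finite)
    (B C : Set ((Cardinal.aleph 1).ord.ToType))
    (hBC : Disjoint B C) (hB : ¬ B.Countable) (hC : ¬ C.Countable) :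
    ¬ ∃ D : Set ℕ, (∀ β ∈ B, AlmostSubset (A β) D) ∧ ∀ γ ∈ C, (A γ ∩ D).Finite := by
  rintro ⟨D, hBD, hCD⟩
  -- stratify B and C by a bound n
  set B' : ℕ → Set _ := fun n => {β | β ∈ B ∧ A β \ D ⊆ Set.Iio n} with hB'def
  set C' : ℕ → Set _ := fun n => {γ | γ ∈ C ∧ A γ ∩ D ⊆ Set.Iio n} with hC'def
  have hBcov : B ⊆ ⋃ n, B' n := by
    intro β hβ
    obtain ⟨m, hm⟩ := (hBD β hβ).bddAbove
    exact Set.mem_iUnion.mpr ⟨m + 1, hβ, fun x hx => Nat.lt_succ_of_le (hm hx)⟩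
  have hCcov : C ⊆ ⋃ n, C' n := by
    intro γ hγ
    obtain ⟨m, hm⟩ := (hCD γ hγ).bddAbove
    exact Set.mem_iUnion.mpr ⟨m + 1, hγ, fun x hx => Nat.lt_succ_of_le (hm hx)⟩
  have hBn : ∃ n, ¬ (B' n).Countable := by
    by_contra h
    push_neg at h
    exact hB ((Set.countable_iUnion h).mono hBcov)
  have hCn : ∃ n, ¬ (C' n).Countable := by
    by_contra h
    push_neg at h
    exact hC ((Set.countable_iUnion h).mono hCcov)
  obtain ⟨n₀, hn₀⟩ := hBn
  obtain ⟨n₁, hn₁⟩ := hCn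
  set n := max n₀ n₁ with hn
  have hBn' : ¬ (B' n).Countable := fun h => hn₀ (h.mono (fun β hβ => by
    obtain ⟨h1, h2⟩ := hβ
    exact ⟨h1, h2.trans (Set.Iio_subset_Iio (le_max_left _ _))⟩))
  have hCn' : ¬ (C' n).Countable := fun h => hn₁ (h.mono (fun γ hγ => by
    obtain ⟨h1, h2⟩ := hγ
    exact ⟨h1, h2.trans (Set.Iio_subset_Iio (le_max_right _ _))⟩))
  -- key: for β ∈ B' n, γ ∈ C' n, A β ∩ A γ ⊆ Iio n
  have key : ∀ β ∈ B' n, ∀ γ ∈ C' n, A β ∩ A γ ⊆ Set.Iio n := by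
    rintro β ⟨-, hβ⟩ γ ⟨-, hγ⟩ x ⟨hxβ, hxγ⟩
    by_contra hx
    have hxD : x ∈ D := by
      by_contra hxD
      exact hx (hβ ⟨hxβ, hxD⟩)
    exact hx (hγ ⟨hxγ, hxD⟩)
  -- pick a countably infinite subset of C' n
  have hCinf : (C' n).Infinite := fun h => hCn' h.countable
  let g := hCinf.natEmbedding
  have hU : (⋃ k, Set.Iic ((g k : (Cardinal.aleph 1).ord.ToType))).Countable :=
    Set.countable_iUnion (fun k => iic_countable _)
  obtain ⟨α, hαB, hαU⟩ : ∃ α ∈ B' n, α ∉ ⋃ k, Set.Iic ((g k : (Cardinal.aleph 1).ord.ToType)) := by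
    by_contra h
    push_neg at h
    exact hBn' (hU.mono h)
  -- all g k lie in the Luzin set for α, n
  have hrange : Set.range (fun k => (g k : (Cardinal.aleph 1).ord.ToType)) ⊆
      {β | β < α ∧ A α ∩ A β ⊆ Set.Iio n} := by
    rintro β ⟨k, rfl⟩
    have hlt : (g k : (Cardinal.aleph 1).ord.ToType) < α := by
      by_contra h
      exact hαU (Set.mem_iUnion.mpr ⟨k, not_lt.mp h⟩)
    exact ⟨hlt, key α hαB _ (g k).2⟩
  have hfin := (hLuzin α n).subset hrange
  have : Function.Injective (fun k => (g k : (Cardinal.aleph 1).ord.ToType)) :=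
    fun a b hab => g.injective (Subtype.ext hab)
  exact Set.infinite_range_of_injective this hfin
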